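/- arXiv:2506.22393 — 2 statements merged into one kernel-verified Lean document; each statement's English description precedes it below -/
import Mathlib

section
/- Domain adaptation generalization bound: let S and T be probability distributions on X × {0,1}, let Φ be a class of hypotheses φ : X → {0,1}, and define ε_D(φ) = P_{(x,y)~D}[φ(x) ≠ y]. Define the Φ-divergence d_Φ(S,T) = 2·sup_{φ∈Φ} |P_{x~S_X}[φ(x)=1] − P_{x~T_X}[φ(x)=1]| and κ = inf_{φ'∈Φ} (ε_S(φ') + ε_T(φ')). Then, assuming Φ is symmetric under pointwise symmetric differences (i.e., for any φ, φ' ∈ Φ the indicator x ↦ 1[φ(x)≠φ'(x)] equals 1[ψ(x)=1] for some ψ ∈ Φ), for every φ ∈ Φ: ε_T(φ) ≤ ε_S(φ) + d_Φ(S,T) + κ. -/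
open MeasureTheory

/-- Classification error of a binary hypothesis under a distribution on X × Bool. -/
noncomputable def clsErr {X : Type*} [MeasurableSpace X]
    (D : Measure (X × Bool)) (φ : X → Bool) : ℝ :=
  (D {p | φ p.1 ≠ p.2}).toReal

/-- The Φ-divergence between two distributions on the feature space. -/
noncomputable def dPhi {X : Type*} [MeasurableSpace X]
    (Φ : Set (X → Bool)) (S T : Measure X) : ℝ :=
  2 * sSup {r : ℝ | ∃ φ ∈ Φ,
    r = |(S {x | φ x = true}).toReal - (T {x | φ x = true}).toReal|}

/-- toReal subadditivity for a finite measure along a set inclusion. -/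
lemma toReal_subadd {Y : Type*} [MeasurableSpace Y] (D : Measure Y)
    [IsFiniteMeasure D] {A B C : Set Y} (h : A ⊆ B ∪ C) :
    (D A).toReal ≤ (D B).toReal + (D C).toReal := by
  have h1 : D A ≤ D B + D C := le_trans (measure_mono h) (measure_union_le B C)
  have := ENNReal.toReal_mono (a := D A) (b := D B + D C)
    (by simp [measure_ne_top]) h1
  rwa [ENNReal.toReal_add (measure_ne_top _ _) (measure_ne_top _ _)] at this

/-- Domain adaptation generalization bound (Ben-David et al.):
ε_T(φ) ≤ ε_S(φ) + d_Φ(S,T) + κ, where κ is attained by φ*. -/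
theorem domain_adaptation_bound {X : Type*} [MeasurableSpace X]
    (S T : Measure (X × Bool)) [IsProbabilityMeasure S] [IsProbabilityMeasure T]
    (Φ : Set (X → Bool)) (hΦmeas : ∀ φ ∈ Φ, Measurable φ)
    (hsymdiff : ∀ φ ∈ Φ, ∀ φ' ∈ Φ, ∃ ψ ∈ Φ, ∀ x, (ψ x = true ↔ φ x ≠ φ' x))
    (φstar : X → Bool) (hφstar : φstar ∈ Φ)
    (hmin : ∀ ψ ∈ Φ, clsErr S φstar + clsErr T φstar ≤ clsErr S ψ + clsErr T ψ)
    (φ : X → Bool) (hφ : φ ∈ Φ) :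
    clsErr T φ ≤ clsErr S φ + dPhi Φ (S.map Prod.fst) (T.map Prod.fst)
      + (clsErr S φstar + clsErr T φstar) := by
  obtain ⟨ψ, hψΦ, hψ⟩ := hsymdiff φ hφ φstar hφstar
  have hψm : Measurable ψ := hΦmeas ψ hψΦ
  have hfst : Measurable (Prod.fst : X × Bool → X) := measurable_fst
  haveI : IsProbabilityMeasure (S.map Prod.fst) :=
    Measure.isProbabilityMeasure_map hfst.aemeasurable
  haveI : IsProbabilityMeasure (T.map Prod.fst) :=
    Measure.isProbabilityMeasure_map hfst.aemeasurable
  set E : Set X := {x | ψ x = true} with hE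
  have hEmeas : MeasurableSet E := hψm (measurableSet_singleton true)
  -- map measures on E
  have hSmap : (S.map Prod.fst) E = S (Prod.fst ⁻¹' E) :=
    Measure.map_apply hfst hEmeas
  have hTmap : (T.map Prod.fst) E = T (Prod.fst ⁻¹' E) :=
    Measure.map_apply hfst hEmeas
  set sS : ℝ := ((S.map Prod.fst) E).toReal with hsS
  set sT : ℝ := ((T.map Prod.fst) E).toReal with hsT
  -- Step 1: clsErr T φ ≤ clsErr T φstar + sT
  have step1 : clsErr T φ ≤ clsErr T φstar + sT := by
    have hsub : {p : X × Bool | φ p.1 ≠ p.2} ⊆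
        {p : X × Bool | φstar p.1 ≠ p.2} ∪ (Prod.fst ⁻¹' E) := by
      intro p hp
      by_cases h : φstar p.1 = p.2
      · right
        have : φ p.1 ≠ φstar p.1 := by
          intro hc; exact hp (h ▸ hc)
        exact (hψ p.1).mpr this
      · left; exact h
    have := toReal_subadd T hsub
    simpa [clsErr, hsT, hTmap] using this
  -- Step 2: sT ≤ sS + 2 * sSup ...
  have hmem : |sS - sT| ∈ {r : ℝ | ∃ φ ∈ Φ,
      r = |((S.map Prod.fst) {x | φ x = true}).toReal
        - ((T.map Prod.fst) {x | φ x = true}).toReal|} :=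
    ⟨ψ, hψΦ, rfl⟩
  have hbdd : BddAbove {r : ℝ | ∃ φ ∈ Φ,
      r = |((S.map Prod.fst) {x | φ x = true}).toReal
        - ((T.map Prod.fst) {x | φ x = true}).toReal|} := by
    refine ⟨1, ?_⟩
    rintro r ⟨χ, hχ, rfl⟩
    have hSb : ((S.map Prod.fst) {x | χ x = true}).toReal ≤ 1 := by
      have := prob_le_one (μ := S.map Prod.fst) (s := {x | χ x = true})
      simpa using ENNReal.toReal_mono (by simp) this
    have hTb : ((T.map Prod.fst) {x | χ x = true}).toReal ≤ 1 := by
      have := prob_le_one (μ := T.map Prod.fst) (s := {x | χ x = true})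
      simpa using ENNReal.toReal_mono (by simp) this
    have h0S : 0 ≤ ((S.map Prod.fst) {x | χ x = true}).toReal := ENNReal.toReal_nonneg
    have h0T : 0 ≤ ((T.map Prod.fst) {x | χ x = true}).toReal := ENNReal.toReal_nonneg
    rw [abs_le]; constructor <;> linarith
  have hsup : |sS - sT| ≤ sSup {r : ℝ | ∃ φ ∈ Φ,
      r = |((S.map Prod.fst) {x | φ x = true}).toReal
        - ((T.map Prod.fst) {x | φ x = true}).toReal|} :=
    le_csSup hbdd hmem
  have hsupnn : 0 ≤ sSup {r : ℝ | ∃ φ ∈ Φ,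
      r = |((S.map Prod.fst) {x | φ x = true}).toReal
        - ((T.map Prod.fst) {x | φ x = true}).toReal|} :=
    le_trans (abs_nonneg _) hsup
  have step2 : sT ≤ sS + dPhi Φ (S.map Prod.fst) (T.map Prod.fst) := by
    have h1 : sT - sS ≤ |sS - sT| := by
      rw [abs_sub_comm]; exact le_abs_self _
    have : |sS - sT| ≤ dPhi Φ (S.map Prod.fst) (T.map Prod.fst) := by
      unfold dPhi; nlinarith
    linarith
  -- Step 3: sS ≤ clsErr S φ + clsErr S φstar
  have step3 : sS ≤ clsErr S φ + clsErr S φstar := by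
    have hsub : (Prod.fst ⁻¹' E : Set (X × Bool)) ⊆
        {p : X × Bool | φ p.1 ≠ p.2} ∪ {p : X × Bool | φstar p.1 ≠ p.2} := by
      intro p hp
      have hne : φ p.1 ≠ φstar p.1 := (hψ p.1).mp hp
      by_cases h : φ p.1 = p.2
      · right; intro hc; exact hne (h.trans hc.symm)
      · left; exact h
    have := toReal_subadd S hsub
    simpa [clsErr, hsS, hSmap] using this
  linarith
end

section
/- InfoNCE as a mutual information lower bound (tractable finite form): let p be a joint probability mass function of (Z, Z̃) on finite sets, and suppose the critic is optimal, i.e., the score function is f(z, z̃) = log( p(z,z̃)/(p_Z(z)·p_{Z̃}(z̃)) ). Then for K ≥ 1 i.i.d. samples (Z₁,Z̃₁),…,(Z_K,Z̃_K) from p, the expected InfoNCE objective E[ log( e^{f(Z₁,Z̃₁)} / ((1/K)·Σ_{k=1}^K e^{f(Z_k,Z̃₁)}) ) ] ≤ I(Z; Z̃), equivalently I(Z;Z̃) ≥ log K − E[L_CL] where L_CL = −log( e^{f(Z₁,Z̃₁)} / Σ_{k=1}^K e^{f(Z_k,Z̃₁)} ). -/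
open Finset Real

noncomputable def probOf {Ω α : Type*} [Fintype Ω] [DecidableEq α]
    (p : Ω → ℝ) (X : Ω → α) (a : α) : ℝ :=
  ∑ ω, if X ω = a then p ω else 0

noncomputable def shannonEntropy {Ω α : Type*} [Fintype Ω] [Fintype α] [DecidableEq α]
    (p : Ω → ℝ) (X : Ω → α) : ℝ :=
  -∑ a, probOf p X a * Real.log (probOf p X a)

noncomputable def condEntropy' {Ω α β : Type*} [Fintype Ω] [Fintype α] [DecidableEq α]
    [Fintype β] [DecidableEq β] (p : Ω → ℝ) (X : Ω → α) (Y : Ω → β) : ℝ :=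
  shannonEntropy p (fun ω => (X ω, Y ω)) - shannonEntropy p Y

noncomputable def mutualInfo {Ω α β : Type*} [Fintype Ω] [Fintype α] [DecidableEq α]
    [Fintype β] [DecidableEq β] (p : Ω → ℝ) (X : Ω → α) (Y : Ω → β) : ℝ :=
  shannonEntropy p X - condEntropy' p X Y

private lemma pi_sum_prod {ι γ : Type*} [Fintype ι] [DecidableEq ι] [Fintype γ]
    (q : ι → γ → ℝ) :
    ∑ b : ι → γ, ∏ k, q k (b k) = ∏ k, ∑ y, q k y := by
  rw [Finset.prod_univ_sum, Fintype.piFinset_univ]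

private lemma sum_pi_extract {ι γ : Type*} [Fintype ι] [DecidableEq ι] [Fintype γ]
    (i0 : ι) (q : ι → γ → ℝ) (F : γ → ℝ) :
    ∑ b : ι → γ, (∏ k, q k (b k)) * F (b i0)
      = (∑ y, q i0 y * F y) * ∏ k ∈ univ.erase i0, ∑ y, q k y := by
  have h1 : ∑ b : ι → γ, (∏ k, q k (b k)) * F (b i0)
      = ∑ b : ι → γ, ∏ k, (if k = i0 then q k (b k) * F (b k) else q k (b k)) := by
    refine Finset.sum_congr rfl fun b _ => ?_
    rw [← Finset.mul_prod_erase univ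
        (fun k => if k = i0 then q k (b k) * F (b k) else q k (b k)) (Finset.mem_univ i0),
      ← Finset.mul_prod_erase univ (fun k => q k (b k)) (Finset.mem_univ i0)]
    rw [if_pos rfl,
      Finset.prod_congr rfl (fun k hk => if_neg (Finset.ne_of_mem_erase hk))]
    ring
  rw [h1,
    show (∑ b : ι → γ, ∏ k, (if k = i0 then q k (b k) * F (b k) else q k (b k)))
      = ∏ k, ∑ y, (if k = i0 then q k y * F y else q k y) from
      pi_sum_prod (fun k y => if k = i0 then q k y * F y else q k y),
    ← Finset.mul_prod_erase univ
      (fun k => ∑ y, (if k = i0 then q k y * F y else q k y)) (Finset.mem_univ i0)]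
  congr 1
  · exact Finset.sum_congr rfl fun y _ => if_pos rfl
  · exact Finset.prod_congr rfl fun k hk =>
      Finset.sum_congr rfl fun y _ => if_neg (Finset.ne_of_mem_erase hk)

private lemma sum_pi_extract' {ι γ : Type*} [Fintype ι] [DecidableEq ι] [Fintype γ]
    (i0 : ι) (q : ι → γ → ℝ) (F : γ → ℝ) :
    ∑ b : ι → γ, (∏ k ∈ univ.erase i0, q k (b k)) * F (b i0)
      = (∑ y, F y) * ∏ k ∈ univ.erase i0, ∑ y, q k y := by
  have h := sum_pi_extract i0 (fun k y => if k = i0 then 1 else q k y) F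
  have h2 : ∀ b : ι → γ, (∏ k, (if k = i0 then (1:ℝ) else q k (b k)))
      = ∏ k ∈ univ.erase i0, q k (b k) := by
    intro b
    rw [← Finset.mul_prod_erase univ (fun k => if k = i0 then (1:ℝ) else q k (b k))
      (Finset.mem_univ i0), if_pos rfl, one_mul]
    exact Finset.prod_congr rfl fun k hk => if_neg (Finset.ne_of_mem_erase hk)
  calc ∑ b : ι → γ, (∏ k ∈ univ.erase i0, q k (b k)) * F (b i0)
      = ∑ b : ι → γ, (∏ k, (if k = i0 then (1:ℝ) else q k (b k))) * F (b i0) := by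
        exact Finset.sum_congr rfl fun b _ => by rw [h2 b]
    _ = (∑ y, (if i0 = i0 then (1:ℝ) else q i0 y) * F y)
          * ∏ k ∈ univ.erase i0, ∑ y, (if k = i0 then (1:ℝ) else q k y) := h
    _ = (∑ y, F y) * ∏ k ∈ univ.erase i0, ∑ y, q k y := by
        congr 1
        · exact Finset.sum_congr rfl fun y _ => by rw [if_pos rfl, one_mul]
        · exact Finset.prod_congr rfl fun k hk =>
            Finset.sum_congr rfl fun y _ => by rw [if_neg (Finset.ne_of_mem_erase hk)]

private lemma marginalize {α β : Type*} [Fintype α] [DecidableEq α] [Fintype β] [DecidableEq β]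
    {K : ℕ} (p : α × β → ℝ) (i0 : Fin K) (F : (Fin K → α) → β → ℝ) :
    ∑ ω : Fin K → α × β, (∏ k, p (ω k)) * F (fun k => (ω k).1) ((ω i0).2)
      = ∑ a : Fin K → α, (∏ k ∈ univ.erase i0, ∑ w, p (a k, w)) *
          ∑ b, p (a i0, b) * F a b := by
  classical
  have h0 : (∑ ω : Fin K → α × β, (∏ k, p (ω k)) * F (fun k => (ω k).1) ((ω i0).2))
      = ∑ x : (Fin K → α) × (Fin K → β), (∏ k, p (x.1 k, x.2 k)) * F x.1 (x.2 i0) :=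
    (Equiv.sum_comp (Equiv.arrowProdEquivProdArrow (Fin K) (fun _ => α) (fun _ => β)).symm
      (fun ω => (∏ k, p (ω k)) * F (fun k => (ω k).1) ((ω i0).2))).symm
  rw [h0, Fintype.sum_prod_type]
  refine Finset.sum_congr rfl fun a _ => ?_
  rw [show (∑ bb : Fin K → β, (∏ k, p (a k, bb k)) * F a (bb i0))
      = (∑ y, p (a i0, y) * F a y) * ∏ k ∈ univ.erase i0, ∑ y, p (a k, y) from
      sum_pi_extract i0 (fun k y => p (a k, y)) (F a)]
  ring

/-- InfoNCE as a mutual information lower bound (Proposition 1): with the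
optimal critic f(z,zt) = log(p(z,zt)/(p_Z(z)·p_{Z̃}(zt))) and K i.i.d. samples,
the expected InfoNCE objective is at most I(Z;Z̃); equivalently
I(Z;Z̃) ≥ log K − E[L_CL]. -/
theorem infoNCE_mutual_information_bound {α β : Type*}
    [Fintype α] [DecidableEq α] [Fintype β] [DecidableEq β]
    (p : α × β → ℝ) (hp : ∀ x, 0 < p x) (hp1 : ∑ x, p x = 1)
    (K : ℕ) (hK : 1 ≤ K) (f : α × β → ℝ)
    (hf : ∀ z zt, f (z, zt) =
      Real.log (p (z, zt) / ((∑ w, p (z, w)) * (∑ w, p (w, zt))))) :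
    (∑ ω : Fin K → α × β, (∏ k, p (ω k)) *
        Real.log (Real.exp (f (ω ⟨0, hK⟩)) /
          ((1 / K : ℝ) * ∑ k, Real.exp (f ((ω k).1, (ω ⟨0, hK⟩).2)))))
      ≤ mutualInfo p Prod.fst Prod.snd ∧
    Real.log K - (∑ ω : Fin K → α × β, (∏ k, p (ω k)) *
        (-Real.log (Real.exp (f (ω ⟨0, hK⟩)) /
          (∑ k, Real.exp (f ((ω k).1, (ω ⟨0, hK⟩).2))))))
      ≤ mutualInfo p Prod.fst Prod.snd := by
  classical
  have hnab : Nonempty (α × β) := by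
    by_contra h
    rw [not_nonempty_iff] at h
    simp [Finset.univ_eq_empty] at hp1
  have hna : Nonempty α := ⟨(Classical.arbitrary (α × β)).1⟩
  have hnb : Nonempty β := ⟨(Classical.arbitrary (α × β)).2⟩
  set i0 : Fin K := ⟨0, hK⟩ with hi0
  have hnK : Nonempty (Fin K) := ⟨i0⟩
  have hKR : (0 : ℝ) < K := by exact_mod_cast hK
  set pZ : α → ℝ := fun z => ∑ w, p (z, w) with hpZ
  set pT : β → ℝ := fun t => ∑ w, p (w, t) with hpT
  set g : α → β → ℝ := fun z t => p (z, t) / (pZ z * pT t) with hg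
  have hpZpos : ∀ z, 0 < pZ z := fun z => Finset.sum_pos (fun w _ => hp _) univ_nonempty
  have hpTpos : ∀ t, 0 < pT t := fun t => Finset.sum_pos (fun w _ => hp _) univ_nonempty
  have hgpos : ∀ z t, 0 < g z t := fun z t => div_pos (hp _) (mul_pos (hpZpos z) (hpTpos t))
  have hpZsum : ∑ z, pZ z = 1 := by rw [hpZ, ← Fintype.sum_prod_type]; exact hp1
  have hpTsum : ∑ t, pT t = 1 := by
    rw [hpT, Finset.sum_comm, ← Fintype.sum_prod_type]; exact hp1
  have hpfac : ∀ z t, p (z, t) = pZ z * (pT t * g z t) := by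
    intro z t
    have h1 : g z t * (pZ z * pT t) = p (z, t) :=
      div_mul_cancel₀ (p (z, t)) (mul_pos (hpZpos z) (hpTpos t)).ne'
    rw [← h1]; ring
  have hexp : ∀ z t, Real.exp (f (z, t)) = g z t := by
    intro z t
    rw [hf z t]
    exact Real.exp_log (hgpos z t)
  set S : (Fin K → α) → β → ℝ := fun a b => (1 / K : ℝ) * ∑ k, g (a k) b with hSdef
  have hSpos : ∀ a b, 0 < S a b := fun a b =>
    mul_pos (by positivity) (Finset.sum_pos (fun k _ => hgpos _ _) univ_nonempty)
  -- MI identity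
  have hprobFst : ∀ z, probOf p Prod.fst z = pZ z := by
    intro z
    unfold probOf
    rw [Fintype.sum_prod_type]
    dsimp only
    rw [Finset.sum_congr rfl (fun x (_ : x ∈ univ) => show
      (∑ y, if x = z then p (x, y) else 0) = if x = z then pZ x else 0 by
        split
        · rfl
        · simp)]
    rw [Finset.sum_ite_eq' univ z pZ]
    simp
  have hprobSnd : ∀ t, probOf p Prod.snd t = pT t := by
    intro t
    unfold probOf
    rw [Fintype.sum_prod_type]
    dsimp only
    rw [Finset.sum_congr rfl (fun x (_ : x ∈ univ) => show
      (∑ y, if y = t then p (x, y) else 0) = p (x, t) by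
        rw [Finset.sum_ite_eq' univ t (fun y => p (x, y))]
        simp)]
  have hprobPair : ∀ c : α × β,
      probOf p (fun ω : α × β => (Prod.fst ω, Prod.snd ω)) c = p c := by
    intro c
    unfold probOf
    simp only [Prod.mk.eta]
    rw [Finset.sum_ite_eq' univ c p]
    simp
  have hMI : mutualInfo p Prod.fst Prod.snd = ∑ z, ∑ b, p (z, b) * Real.log (g z b) := by
    unfold mutualInfo condEntropy' shannonEntropy
    simp only [hprobFst, hprobSnd, hprobPair]
    have e1 : ∀ z b, p (z, b) * Real.log (g z b)
        = p (z, b) * Real.log (p (z, b)) - (p (z, b) * Real.log (pZ z)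
            + p (z, b) * Real.log (pT b)) := by
      intro z b
      rw [hg, Real.log_div (hp _).ne' (mul_pos (hpZpos z) (hpTpos b)).ne',
        Real.log_mul (hpZpos z).ne' (hpTpos b).ne']
      ring
    rw [Finset.sum_congr rfl fun z _ => Finset.sum_congr rfl fun b (_ : b ∈ univ) => e1 z b]
    have e2 : ∑ z, ∑ b, (p (z, b) * Real.log (p (z, b)) - (p (z, b) * Real.log (pZ z)
        + p (z, b) * Real.log (pT b)))
        = (∑ z, ∑ b, p (z, b) * Real.log (p (z, b)))
          - ((∑ z, ∑ b, p (z, b) * Real.log (pZ z)) + ∑ z, ∑ b, p (z, b) * Real.log (pT b)) := by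
      rw [← Finset.sum_add_distrib, ← Finset.sum_sub_distrib]
      refine Finset.sum_congr rfl fun z _ => ?_
      rw [← Finset.sum_add_distrib, ← Finset.sum_sub_distrib]
    rw [e2]
    have e3 : ∑ z, ∑ b, p (z, b) * Real.log (p (z, b))
        = ∑ c : α × β, p c * Real.log (p c) :=
        (Fintype.sum_prod_type (fun c : α × β => p c * Real.log (p c))).symm
    have e4 : ∑ z, ∑ b, p (z, b) * Real.log (pZ z) = ∑ z, pZ z * Real.log (pZ z) := by
      refine Finset.sum_congr rfl fun z _ => ?_
      rw [← Finset.sum_mul]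
    have e5 : ∑ z, ∑ b, p (z, b) * Real.log (pT b) = ∑ b, pT b * Real.log (pT b) := by
      rw [Finset.sum_comm]
      refine Finset.sum_congr rfl fun b _ => ?_
      rw [← Finset.sum_mul]
    rw [e3, e4, e5]
    ring
  -- pointwise rewriting of the InfoNCE integrand
  have hpt1 : ∀ ω : Fin K → α × β,
      Real.log (Real.exp (f (ω i0)) / ((1 / K : ℝ) * ∑ k, Real.exp (f ((ω k).1, (ω i0).2))))
        = Real.log (g ((ω i0).1) ((ω i0).2)) - Real.log (S (fun k => (ω k).1) ((ω i0).2)) := by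
    intro ω
    have h1 : Real.exp (f (ω i0)) = g (ω i0).1 (ω i0).2 := by
      have := hexp (ω i0).1 (ω i0).2
      rwa [Prod.mk.eta] at this
    rw [h1, Finset.sum_congr rfl (fun k (_ : k ∈ univ) => hexp (ω k).1 (ω i0).2)]
    exact Real.log_div (hgpos _ _).ne' (hSpos _ _).ne'
  set B2 : Fin K → ℝ := fun j => ∑ a : Fin K → α, ∑ b,
      (∏ k, pZ (a k)) * (pT b * (g (a j) b * Real.log (S a b))) with hB2
  -- step 1 : the InfoNCE sum equals MI minus B2 i0
  have key : (∑ ω : Fin K → α × β, (∏ k, p (ω k)) *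
        Real.log (Real.exp (f (ω i0)) / ((1 / K : ℝ) * ∑ k, Real.exp (f ((ω k).1, (ω i0).2)))))
      = (∑ z, ∑ b, p (z, b) * Real.log (g z b)) - B2 i0 := by
    rw [Finset.sum_congr rfl fun ω (_ : ω ∈ univ) => by rw [hpt1 ω]]
    rw [show (∑ ω : Fin K → α × β, (∏ k, p (ω k)) *
          (Real.log (g ((ω i0).1) ((ω i0).2)) - Real.log (S (fun k => (ω k).1) ((ω i0).2))))
        = ∑ a : Fin K → α, (∏ k ∈ univ.erase i0, pZ (a k)) *
            ∑ b, p (a i0, b) * (Real.log (g (a i0) b) - Real.log (S a b)) from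
      marginalize p i0 (fun a b => Real.log (g (a i0) b) - Real.log (S a b))]
    have hsplit : ∀ a : Fin K → α,
        (∏ k ∈ univ.erase i0, pZ (a k)) *
            ∑ b, p (a i0, b) * (Real.log (g (a i0) b) - Real.log (S a b))
          = (∏ k ∈ univ.erase i0, pZ (a k)) * (∑ b, p (a i0, b) * Real.log (g (a i0) b))
            - (∏ k ∈ univ.erase i0, pZ (a k)) * ∑ b, p (a i0, b) * Real.log (S a b) := by
      intro a
      rw [← mul_sub, ← Finset.sum_sub_distrib]
      congr 1
      exact Finset.sum_congr rfl fun b _ => by ring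
    rw [Finset.sum_congr rfl fun a (_ : a ∈ univ) => hsplit a, Finset.sum_sub_distrib]
    congr 1
    · rw [show (∑ a : Fin K → α, (∏ k ∈ univ.erase i0, pZ (a k)) *
            (∑ b, p (a i0, b) * Real.log (g (a i0) b)))
          = (∑ z, ∑ b, p (z, b) * Real.log (g z b)) * ∏ k ∈ univ.erase i0, ∑ y, pZ y from
          sum_pi_extract' i0 (fun _ z => pZ z) (fun z => ∑ b, p (z, b) * Real.log (g z b))]
      rw [hpZsum, Finset.prod_const_one, mul_one]
    · rw [hB2]
      refine Finset.sum_congr rfl fun a _ => ?_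
      rw [Finset.mul_sum]
      refine Finset.sum_congr rfl fun b _ => ?_
      rw [hpfac (a i0) b, ← Finset.mul_prod_erase univ (fun k => pZ (a k)) (Finset.mem_univ i0)]
      ring
  -- symmetry of B2
  have hswapbij : ∀ j : Fin K,
      Function.Bijective (fun a : Fin K → α => a ∘ (Equiv.swap i0 j)) := by
    intro j
    constructor
    · intro a1 a2 h
      funext k
      have := congrFun h ((Equiv.swap i0 j) k)
      simpa [Function.comp, Equiv.swap_apply_self] using this
    · intro a
      exact ⟨a ∘ (Equiv.swap i0 j), by funext k; simp [Function.comp, Equiv.swap_apply_self]⟩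
  have hsym : ∀ j : Fin K, B2 j = B2 i0 := by
    intro j
    refine (Fintype.sum_bijective (fun a : Fin K → α => a ∘ (Equiv.swap i0 j)) (hswapbij j)
      _ _ ?_).symm
    intro a
    refine Finset.sum_congr rfl fun b _ => ?_
    have e1 : ∏ k, pZ ((a ∘ (Equiv.swap i0 j)) k) = ∏ k, pZ (a k) :=
      Equiv.prod_comp (Equiv.swap i0 j) (fun k => pZ (a k))
    have e2 : S (a ∘ (Equiv.swap i0 j)) b = S a b := by
      rw [hSdef]
      dsimp only
      congr 1
      exact Equiv.sum_comp (Equiv.swap i0 j) (fun k => g (a k) b)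
    rw [e1, e2, show (a ∘ (Equiv.swap i0 j)) j = a i0 from congrArg a (Equiv.swap_apply_right i0 j)]
  -- B2 i0 as an x log x average
  have hX : ∑ x : (Fin K → α) × β,
      ((∏ k, pZ (x.1 k)) * pT x.2) * (S x.1 x.2 * Real.log (S x.1 x.2)) = B2 i0 := by
    rw [Fintype.sum_prod_type]
    have hpoint : ∀ (a : Fin K → α) (b : β),
        ((∏ k, pZ (a k)) * pT b) * (S a b * Real.log (S a b))
          = (1 / K : ℝ) * ∑ j, (∏ k, pZ (a k)) * (pT b * (g (a j) b * Real.log (S a b))) := by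
      intro a b
      have h2 : ∑ j, (∏ k, pZ (a k)) * (pT b * (g (a j) b * Real.log (S a b)))
          = ((∏ k, pZ (a k)) * (pT b * Real.log (S a b))) * ∑ j, g (a j) b := by
        rw [Finset.mul_sum]
        exact Finset.sum_congr rfl fun j _ => by ring
      rw [h2, show S a b = (1 / K : ℝ) * ∑ j, g (a j) b from rfl]
      ring
    rw [Finset.sum_congr rfl fun a (_ : a ∈ univ) =>
      Finset.sum_congr rfl fun b (_ : b ∈ univ) => hpoint a b]
    rw [Finset.sum_congr rfl fun a (_ : a ∈ univ) =>
      (Finset.mul_sum univ _ ((1 : ℝ) / K)).symm, ← Finset.mul_sum]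
    have hcomm : ∑ a : Fin K → α, ∑ b, ∑ j,
        (∏ k, pZ (a k)) * (pT b * (g (a j) b * Real.log (S a b)))
        = ∑ j : Fin K, B2 j := by
      calc ∑ a : Fin K → α, ∑ b, ∑ j,
            (∏ k, pZ (a k)) * (pT b * (g (a j) b * Real.log (S a b)))
          = ∑ a : Fin K → α, ∑ j, ∑ b,
            (∏ k, pZ (a k)) * (pT b * (g (a j) b * Real.log (S a b))) :=
          Finset.sum_congr rfl fun a _ => Finset.sum_comm
        _ = ∑ j : Fin K, ∑ a : Fin K → α, ∑ b,
            (∏ k, pZ (a k)) * (pT b * (g (a j) b * Real.log (S a b))) :=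
          Finset.sum_comm
        _ = ∑ j : Fin K, B2 j := rfl
    rw [hcomm, Finset.sum_congr rfl fun j (_ : j ∈ univ) => hsym j, Finset.sum_const,
      Finset.card_univ, Fintype.card_fin, nsmul_eq_mul]
    field_simp
  -- total mass of the weights
  have hμ1 : ∑ x : (Fin K → α) × β, (∏ k, pZ (x.1 k)) * pT x.2 = 1 := by
    rw [Fintype.sum_prod_type]
    rw [Finset.sum_congr rfl fun a (_ : a ∈ univ) =>
      (Finset.mul_sum univ pT (∏ k, pZ (a k))).symm]
    rw [hpTsum]
    simp only [mul_one]
    rw [pi_sum_prod (fun _ z => pZ z), hpZsum, Finset.prod_const_one]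
  -- mean of S is 1
  have hμS : ∑ x : (Fin K → α) × β, ((∏ k, pZ (x.1 k)) * pT x.2) * S x.1 x.2 = 1 := by
    rw [Fintype.sum_prod_type]
    have hinner : ∀ (b : β) (j : Fin K),
        ∑ a : Fin K → α, (∏ k, pZ (a k)) * g (a j) b = 1 := by
      intro b j
      rw [show (∑ a : Fin K → α, (∏ k, pZ (a k)) * g (a j) b)
          = (∑ y, pZ y * g y b) * ∏ k ∈ univ.erase j, ∑ y, pZ y from
          sum_pi_extract j (fun _ z => pZ z) (fun z => g z b)]
      rw [hpZsum, Finset.prod_const_one, mul_one]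
      have hyb : ∀ y, pZ y * g y b = p (y, b) / pT b := by
        intro y
        have h1 : pZ y ≠ 0 := (hpZpos y).ne'
        have h2 : pT b ≠ 0 := (hpTpos b).ne'
        rw [hg]
        field_simp
      rw [Finset.sum_congr rfl fun y (_ : y ∈ univ) => hyb y, ← Finset.sum_div]
      rw [show (∑ y, p (y, b)) = pT b from rfl, div_self (hpTpos b).ne']
    have hpoint2 : ∀ (a : Fin K → α) (b : β), ((∏ k, pZ (a k)) * pT b) * S a b
        = (1 / K : ℝ) * ∑ j, pT b * ((∏ k, pZ (a k)) * g (a j) b) := by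
      intro a b
      have h3 : ∑ j, pT b * ((∏ k, pZ (a k)) * g (a j) b)
          = (pT b * ∏ k, pZ (a k)) * ∑ j, g (a j) b := by
        rw [Finset.mul_sum]
        exact Finset.sum_congr rfl fun j _ => by ring
      rw [h3, show S a b = (1 / K : ℝ) * ∑ j, g (a j) b from rfl]
      ring
    rw [Finset.sum_congr rfl fun a (_ : a ∈ univ) =>
      Finset.sum_congr rfl fun b (_ : b ∈ univ) => hpoint2 a b]
    rw [Finset.sum_congr rfl fun a (_ : a ∈ univ) =>
      (Finset.mul_sum univ _ ((1 : ℝ) / K)).symm, ← Finset.mul_sum]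
    have hcomm2 : ∑ a : Fin K → α, ∑ b, ∑ j, pT b * ((∏ k, pZ (a k)) * g (a j) b)
        = ∑ b : β, ∑ j : Fin K, pT b * ∑ a : Fin K → α, (∏ k, pZ (a k)) * g (a j) b := by
      rw [Finset.sum_comm]
      refine Finset.sum_congr rfl fun b _ => ?_
      rw [Finset.sum_comm]
      refine Finset.sum_congr rfl fun j _ => ?_
      rw [Finset.mul_sum]
    rw [hcomm2]
    rw [Finset.sum_congr rfl fun b (_ : b ∈ univ) =>
      Finset.sum_congr rfl fun j (_ : j ∈ univ) => by rw [hinner b j]]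
    simp only [mul_one, Finset.sum_const, Finset.card_univ, Fintype.card_fin, nsmul_eq_mul]
    rw [← Finset.mul_sum, hpTsum, mul_one]
    field_simp
  -- Jensen : 0 ≤ B2 i0
  have hB2nonneg : 0 ≤ B2 i0 := by
    have hJ := Real.convexOn_mul_log.map_sum_le
      (t := (univ : Finset ((Fin K → α) × β)))
      (w := fun x : (Fin K → α) × β => (∏ k, pZ (x.1 k)) * pT x.2)
      (p := fun x : (Fin K → α) × β => S x.1 x.2)
      (fun x _ => mul_nonneg (Finset.prod_nonneg fun k _ => (hpZpos _).le) (hpTpos _).le)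
      hμ1 (fun x _ => Set.mem_Ici.mpr (hSpos _ _).le)
    simp only [smul_eq_mul] at hJ
    rw [hμS] at hJ
    simp only [Real.log_one, mul_zero, one_mul] at hJ
    calc (0:ℝ) = 1 * Real.log 1 := by simp
      _ ≤ ∑ x : (Fin K → α) × β, ((∏ k, pZ (x.1 k)) * pT x.2) * (S x.1 x.2 * Real.log (S x.1 x.2)) := by
          simpa using hJ
      _ = B2 i0 := hX
  have part1 : (∑ ω : Fin K → α × β, (∏ k, p (ω k)) *
        Real.log (Real.exp (f (ω i0)) / ((1 / K : ℝ) * ∑ k, Real.exp (f ((ω k).1, (ω i0).2)))))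
      ≤ mutualInfo p Prod.fst Prod.snd := by
    rw [key, hMI]
    linarith
  refine ⟨part1, ?_⟩
  -- part 2 : rewrite in terms of part 1
  have hw1 : ∑ ω : Fin K → α × β, ∏ k, p (ω k) = 1 := by
    rw [show (∑ ω : Fin K → α × β, ∏ k, p (ω k)) = ∏ _k : Fin K, ∑ y, p y from
      pi_sum_prod (fun _ x => p x), hp1, Finset.prod_const_one]
  have hpt2 : ∀ ω : Fin K → α × β,
      Real.log (Real.exp (f (ω i0)) / ((1 / K : ℝ) * ∑ k, Real.exp (f ((ω k).1, (ω i0).2))))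
      = Real.log K + Real.log (Real.exp (f (ω i0)) / (∑ k, Real.exp (f ((ω k).1, (ω i0).2)))) := by
    intro ω
    have hD : 0 < ∑ k, Real.exp (f ((ω k).1, (ω i0).2)) :=
      Finset.sum_pos (fun k _ => Real.exp_pos _) univ_nonempty
    rw [Real.log_div (Real.exp_pos _).ne' (mul_pos (by positivity) hD).ne',
      Real.log_div (Real.exp_pos _).ne' hD.ne',
      Real.log_mul (by positivity) hD.ne', one_div, Real.log_inv]
    ring
  have key2 : (∑ ω : Fin K → α × β, (∏ k, p (ω k)) *
        Real.log (Real.exp (f (ω i0)) / ((1 / K : ℝ) * ∑ k, Real.exp (f ((ω k).1, (ω i0).2)))))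
      = Real.log K + ∑ ω : Fin K → α × β, (∏ k, p (ω k)) *
        Real.log (Real.exp (f (ω i0)) / (∑ k, Real.exp (f ((ω k).1, (ω i0).2)))) := by
    rw [Finset.sum_congr rfl fun ω (_ : ω ∈ univ) => by rw [hpt2 ω]]
    rw [show (∑ ω : Fin K → α × β, (∏ k, p (ω k)) *
          (Real.log K + Real.log (Real.exp (f (ω i0)) / (∑ k, Real.exp (f ((ω k).1, (ω i0).2))))))
        = (∑ ω : Fin K → α × β, (∏ k, p (ω k)) * Real.log K)
          + ∑ ω : Fin K → α × β, (∏ k, p (ω k)) *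
              Real.log (Real.exp (f (ω i0)) / (∑ k, Real.exp (f ((ω k).1, (ω i0).2)))) from by
      rw [← Finset.sum_add_distrib]
      exact Finset.sum_congr rfl fun ω _ => by ring]
    rw [← Finset.sum_mul, hw1, one_mul]
  have hneg : (∑ ω : Fin K → α × β, (∏ k, p (ω k)) *
        (-Real.log (Real.exp (f (ω i0)) / (∑ k, Real.exp (f ((ω k).1, (ω i0).2))))))
      = -∑ ω : Fin K → α × β, (∏ k, p (ω k)) *
        Real.log (Real.exp (f (ω i0)) / (∑ k, Real.exp (f ((ω k).1, (ω i0).2)))) := by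
    rw [← Finset.sum_neg_distrib]
    exact Finset.sum_congr rfl fun ω _ => by ring
  rw [hneg]
  have := part1
  rw [key2] at this
  linarith
end
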